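/- arXiv:1704.02035 — 2 statements merged into one kernel-verified Lean document; each statement's English description precedes it below -/
import Mathlib

section
/- Let A be a unital C*-algebra with a faithful tracial state tr_A, and let x, y ∈ M_n(A) be positive elements. Define the Schur (entrywise) product x ⋆ y by (x ⋆ y)_{i,j} = x_{i,j} · y_{i,j}. Then (tr_A ⊗ Tr_n)(x ⋆ y) ≥ 0, where Tr_n is the unnormalized trace on M_n. -/
open scoped ComplexOrder

/-- Let `A` be a unital C*-algebra with a faithful tracial state `tr`,
and let `x, y ∈ Mₙ(A)` be positive (i.e. of the form `star z * z`).  Then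
`(tr ⊗ Trₙ)(x ⋆ y) = ∑ i, tr (xᵢᵢ * yᵢᵢ) ≥ 0`, where `⋆` is the Schur (entrywise) product. -/
theorem schur_product_trace_nonneg
    {A : Type*} [CStarAlgebra A]
    (tr : A →ₗ[ℂ] ℂ)
    (htr_pos : ∀ a : A, 0 ≤ tr (star a * a))
    (htr_tracial : ∀ a b : A, tr (a * b) = tr (b * a))
    (htr_state : tr 1 = 1)
    (htr_faithful : ∀ a : A, tr (star a * a) = 0 → a = 0)
    {n : ℕ} (x y : Matrix (Fin n) (Fin n) A)
    (hx : ∃ z : Matrix (Fin n) (Fin n) A, x = star z * z)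
    (hy : ∃ z : Matrix (Fin n) (Fin n) A, y = star z * z) :
    0 ≤ ∑ i, tr (x i i * y i i) := by
  obtain ⟨z, rfl⟩ := hx
  obtain ⟨w, rfl⟩ := hy
  have key : ∀ a b : A, 0 ≤ tr (star a * a * (star b * b)) := by
    intro a b
    have h := htr_pos (a * star b)
    rw [star_mul, star_star] at h
    have e1 : (b * star a) * (a * star b) = b * (star a * a * star b) := by
      noncomm_ring
    rw [e1, htr_tracial, mul_assoc] at h
    exact h
  apply Finset.sum_nonneg
  intro i _
  have hxe : (star z * z) i i = ∑ k, star (z k i) * z k i := by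
    simp [Matrix.mul_apply, Matrix.star_apply]
  have hye : (star w * w) i i = ∑ l, star (w l i) * w l i := by
    simp [Matrix.mul_apply, Matrix.star_apply]
  rw [hxe, hye, Finset.sum_mul_sum, map_sum]
  apply Finset.sum_nonneg
  intro k _
  rw [map_sum]
  apply Finset.sum_nonneg
  intro l _
  exact key _ _
end

section
/- Let A be a unital C*-algebra with a faithful tracial state tr_A, and let w, x, y, z ∈ M_n(A) with 0 ≤ w ≤ x and 0 ≤ y ≤ z. Then (tr_A ⊗ Tr_n)(w ⋆ y) ≤ (tr_A ⊗ Tr_n)(x ⋆ z), where ⋆ denotes the entrywise (Schur) product. -/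
open scoped ComplexOrder

lemma tr_mul_pos_pos {A : Type*} [CStarAlgebra A]
    (tr : A →ₗ[ℂ] ℂ)
    (htr_pos : ∀ a : A, 0 ≤ tr (star a * a))
    (htr_tracial : ∀ a b : A, tr (a * b) = tr (b * a))
    (a b : A) : 0 ≤ tr (star a * a * (star b * b)) := by
  have h1 : star a * a * (star b * b) = star a * (a * star b * b) := by
    simp [mul_assoc]
  rw [h1, htr_tracial (star a) (a * star b * b)]
  have h2 : a * star b * b * star a = star (b * star a) * (b * star a) := by
    simp [mul_assoc]
  rw [h2]
  exact htr_pos _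

lemma tr_entry_pos {A : Type*} [CStarAlgebra A]
    (tr : A →ₗ[ℂ] ℂ)
    (htr_pos : ∀ a : A, 0 ≤ tr (star a * a))
    (htr_tracial : ∀ a b : A, tr (a * b) = tr (b * a))
    {n : ℕ} (u v : Matrix (Fin n) (Fin n) A) (i : Fin n) :
    0 ≤ tr ((star u * u) i i * ((star v * v) i i)) := by
  have hu : (star u * u) i i = ∑ k, star (u k i) * u k i := by
    simp [Matrix.mul_apply, Matrix.star_apply]
  have hv : (star v * v) i i = ∑ l, star (v l i) * v l i := by
    simp [Matrix.mul_apply, Matrix.star_apply]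
  rw [hu, hv, Finset.sum_mul]
  rw [map_sum]
  refine Finset.sum_nonneg fun k _ => ?_
  rw [Finset.mul_sum, map_sum]
  refine Finset.sum_nonneg fun l _ => ?_
  exact tr_mul_pos_pos tr htr_pos htr_tracial _ _

/-- Let `A` be a unital C*-algebra with a faithful tracial state `tr`, and let
`w, x, y, z ∈ Mₙ(A)` with `0 ≤ w ≤ x` and `0 ≤ y ≤ z` (in the C*-order, i.e. `w` and the
differences `x - w`, `z - y` are of the form `star u * u`).  Then
`(tr ⊗ Trₙ)(w ⋆ y) ≤ (tr ⊗ Trₙ)(x ⋆ z)`, where `⋆` is the Schur (entrywise) product. -/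
theorem schur_product_trace_mono
    {A : Type*} [CStarAlgebra A]
    (tr : A →ₗ[ℂ] ℂ)
    (htr_pos : ∀ a : A, 0 ≤ tr (star a * a))
    (htr_tracial : ∀ a b : A, tr (a * b) = tr (b * a))
    (htr_state : tr 1 = 1)
    (htr_faithful : ∀ a : A, tr (star a * a) = 0 → a = 0)
    {n : ℕ} (w x y z : Matrix (Fin n) (Fin n) A)
    (hw : ∃ u : Matrix (Fin n) (Fin n) A, w = star u * u)
    (hwx : ∃ u : Matrix (Fin n) (Fin n) A, x - w = star u * u)
    (hy : ∃ u : Matrix (Fin n) (Fin n) A, y = star u * u)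
    (hyz : ∃ u : Matrix (Fin n) (Fin n) A, z - y = star u * u) :
    ∑ i, tr (w i i * y i i) ≤ ∑ i, tr (x i i * z i i) := by
  obtain ⟨a, ha⟩ := hw
  obtain ⟨b, hb⟩ := hwx
  obtain ⟨c, hc⟩ := hy
  obtain ⟨d, hd⟩ := hyz
  have hx : x = star a * a + star b * b := by
    rw [← ha, ← hb]; abel
  have hz : z = star c * c + star d * d := by
    rw [← hc, ← hd]; abel
  have expand : ∑ i, tr (x i i * z i i)
      = ∑ i, tr (w i i * y i i)
        + (∑ i, tr ((star a * a) i i * ((star d * d) i i))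
          + ∑ i, tr ((star b * b) i i * ((star c * c) i i))
          + ∑ i, tr ((star b * b) i i * ((star d * d) i i))) := by
    rw [hx, hz, ha, hc, ← Finset.sum_add_distrib, ← Finset.sum_add_distrib,
      ← Finset.sum_add_distrib]
    refine Finset.sum_congr rfl fun i _ => ?_
    simp only [Matrix.add_apply, mul_add, add_mul, map_add]
    ring
  rw [expand]
  have h1 := Finset.sum_nonneg fun i (_ : i ∈ Finset.univ) =>
    tr_entry_pos tr htr_pos htr_tracial a d i
  have h2 := Finset.sum_nonneg fun i (_ : i ∈ Finset.univ) =>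
    tr_entry_pos tr htr_pos htr_tracial b c i
  have h3 := Finset.sum_nonneg fun i (_ : i ∈ Finset.univ) =>
    tr_entry_pos tr htr_pos htr_tracial b d i
  exact le_add_of_nonneg_right (add_nonneg (add_nonneg h1 h2) h3)
end
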